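/- arXiv:2508.08853 — 2 statements merged into one kernel-verified Lean document; each statement's English description precedes it below -/
import Mathlib

section
/- Let G be a connected non-complete graph and H a connected graph with m vertices, and let g be an integer with 0 ≤ g ≤ m − 1. Then the g-extra vertex connectivity of the subdivision edge neighbourhood corona satisfies κ_g(G ⊟ H) = 1 if and only if κ(G) = 1. -/
open SimpleGraph

namespace ExtraConn

variable {V W : Type*}

/-- `S` is an `R_g` vertex cut: deleting `S` disconnects the graph and every
connected component of the remainder has at least `g+1` vertices. -/
def IsRgVertexCut (G : SimpleGraph V) (g : ℕ) (S : Set V) : Prop :=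
  ¬ (G.induce Sᶜ).Preconnected ∧
    ∀ c : (G.induce Sᶜ).ConnectedComponent,
      g + 1 ≤ Nat.card {v : ↥Sᶜ // (G.induce Sᶜ).connectedComponentMk v = c}

/-- The `g`-extra vertex connectivity `κ_g(G)` (`⊤` if no `R_g` vertex cut exists). -/
noncomputable def kappaG (G : SimpleGraph V) (g : ℕ) : ℕ∞ :=
  sInf {n : ℕ∞ | ∃ S : Finset V, IsRgVertexCut G g ↑S ∧ (S.card : ℕ∞) = n}

/-- `S` is a vertex cut of `G`. -/
def IsVertexCut (G : SimpleGraph V) (S : Set V) : Prop :=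
  ¬ (G.induce Sᶜ).Preconnected

/-- The vertex connectivity `κ(G)` (for graphs admitting a vertex cut). -/
noncomputable def kappa (G : SimpleGraph V) : ℕ :=
  sInf {n : ℕ | ∃ S : Finset V, IsVertexCut G ↑S ∧ S.card = n}

/-- `S` is a minimum vertex cut of `G`. -/
def IsMinVertexCut (G : SimpleGraph V) (S : Finset V) : Prop :=
  IsVertexCut G ↑S ∧ S.card = kappa G

/-- Deleting the vertex set `↑A` leaves only components with at least `k+1` vertices. -/
def CutBound (G : SimpleGraph V) (A : Finset V) (k : ℕ) : Prop :=
  ∀ c : (G.induce (↑A : Set V)ᶜ).ConnectedComponent,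
    k + 1 ≤ Nat.card {v // (G.induce (↑A : Set V)ᶜ).connectedComponentMk v = c}

/-- `F` is an `R_g` edge cut. -/
def IsRgEdgeCut (G : SimpleGraph V) (g : ℕ) (F : Set (Sym2 V)) : Prop :=
  F ⊆ G.edgeSet ∧ ¬ (G.deleteEdges F).Preconnected ∧
    ∀ c : (G.deleteEdges F).ConnectedComponent,
      g + 1 ≤ Nat.card {v : V // (G.deleteEdges F).connectedComponentMk v = c}

/-- The `g`-extra edge connectivity `λ_g(G)`. -/
noncomputable def lambdaG (G : SimpleGraph V) (g : ℕ) : ℕ∞ :=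
  sInf {n : ℕ∞ | ∃ F : Finset (Sym2 V), IsRgEdgeCut G g ↑F ∧ (F.card : ℕ∞) = n}

/-- The edge connectivity `λ(G)`. -/
noncomputable def lambda (G : SimpleGraph V) : ℕ :=
  sInf {n : ℕ | ∃ F : Finset (Sym2 V), ↑F ⊆ G.edgeSet ∧
    ¬ (G.deleteEdges ↑F).Preconnected ∧ F.card = n}

/-- The edge corona `G ◇ H`. -/
def edgeCorona (G : SimpleGraph V) (H : SimpleGraph W) :
    SimpleGraph (V ⊕ (G.edgeSet × W)) where
  Adj a b :=
    match a, b with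
    | .inl u, .inl v => G.Adj u v
    | .inl u, .inr ew => u ∈ (ew.1 : Sym2 V)
    | .inr ew, .inl v => v ∈ (ew.1 : Sym2 V)
    | .inr ew, .inr ew' => ew.1 = ew'.1 ∧ H.Adj ew.2 ew'.2
  symm := by
    constructor
    rintro (u | ⟨e, w⟩) (v | ⟨e', w'⟩) h
    · exact h.symm
    · exact h
    · exact h
    · exact ⟨h.1.symm, h.2.symm⟩
  loopless := by
    constructor
    rintro (u | ⟨e, w⟩) h
    · exact G.irrefl h
    · exact H.irrefl h.2

/-- The neighbourhood corona `G * H`. -/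
def neighbourhoodCorona (G : SimpleGraph V) (H : SimpleGraph W) :
    SimpleGraph (V ⊕ (V × W)) where
  Adj a b :=
    match a, b with
    | .inl u, .inl v => G.Adj u v
    | .inl u, .inr iw => G.Adj u iw.1
    | .inr iw, .inl v => G.Adj v iw.1
    | .inr iw, .inr iw' => iw.1 = iw'.1 ∧ H.Adj iw.2 iw'.2
  symm := by
    constructor
    rintro (u | ⟨i, w⟩) (v | ⟨i', w'⟩) h
    · exact h.symm
    · exact h
    · exact h
    · exact ⟨h.1.symm, h.2.symm⟩
  loopless := by
    constructor
    rintro (u | ⟨i, w⟩) h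
    · exact G.irrefl h
    · exact H.irrefl h.2

/-- The subdivision graph `S(G)`. -/
def subdivision (G : SimpleGraph V) : SimpleGraph (V ⊕ G.edgeSet) where
  Adj a b :=
    match a, b with
    | .inl u, .inr e => u ∈ (e : Sym2 V)
    | .inr e, .inl u => u ∈ (e : Sym2 V)
    | _, _ => False
  symm := by
    constructor
    rintro (u | e) (v | e') h
    · exact h.elim
    · exact h
    · exact h
    · exact h.elim
  loopless := by
    constructor
    rintro (u | e) h <;> exact h.elim

/-- The subdivision vertex neighbourhood corona `G ⊡ H`. -/
def subdivisionVertexNC (G : SimpleGraph V) (H : SimpleGraph W) :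
    SimpleGraph ((V ⊕ G.edgeSet) ⊕ (V × W)) where
  Adj a b :=
    match a, b with
    | .inl x, .inl y => (subdivision G).Adj x y
    | .inl (.inr e), .inr iw => iw.1 ∈ (e : Sym2 V)
    | .inr iw, .inl (.inr e) => iw.1 ∈ (e : Sym2 V)
    | .inr iw, .inr iw' => iw.1 = iw'.1 ∧ H.Adj iw.2 iw'.2
    | _, _ => False
  symm := by
    constructor
    rintro ((u | e) | ⟨i, w⟩) ((v | e') | ⟨i', w'⟩) h
    · exact h.elim
    · exact h
    · exact h.elim
    · exact h
    · exact h.elim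
    · exact h
    · exact h.elim
    · exact h
    · exact ⟨h.1.symm, h.2.symm⟩
  loopless := by
    constructor
    rintro ((u | e) | ⟨i, w⟩) h
    · exact h.elim
    · exact h.elim
    · exact H.irrefl h.2

/-- The subdivision edge neighbourhood corona `G ⊟ H`. -/
def subdivisionEdgeNC (G : SimpleGraph V) (H : SimpleGraph W) :
    SimpleGraph ((V ⊕ G.edgeSet) ⊕ (G.edgeSet × W)) where
  Adj a b :=
    match a, b with
    | .inl x, .inl y => (subdivision G).Adj x y
    | .inl (.inl u), .inr ew => u ∈ (ew.1 : Sym2 V)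
    | .inr ew, .inl (.inl u) => u ∈ (ew.1 : Sym2 V)
    | .inr ew, .inr ew' => ew.1 = ew'.1 ∧ H.Adj ew.2 ew'.2
    | _, _ => False
  symm := by
    constructor
    rintro ((u | e) | ⟨e₀, w⟩) ((v | e') | ⟨e₀', w'⟩) h
    · exact h.elim
    · exact h
    · exact h
    · exact h
    · exact h.elim
    · exact h.elim
    · exact h
    · exact h.elim
    · exact ⟨h.1.symm, h.2.symm⟩
  loopless := by
    constructor
    rintro ((u | e) | ⟨e₀, w⟩) h
    · exact h.elim
    · exact h.elim
    · exact H.irrefl h.2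

/-- The generalized corona `G ∘ ⋀ᵢ Hᵢ`. -/
def genCorona (G : SimpleGraph V) {W : V → Type*} (H : ∀ v, SimpleGraph (W v)) :
    SimpleGraph (V ⊕ (Σ v, W v)) where
  Adj a b :=
    match a, b with
    | .inl u, .inl v => G.Adj u v
    | .inl u, .inr p => u = p.1
    | .inr p, .inl v => v = p.1
    | .inr p, .inr q =>
        ∃ (v : V) (w w' : W v), p = ⟨v, w⟩ ∧ q = ⟨v, w'⟩ ∧ (H v).Adj w w'
  symm := by
    constructor
    rintro (u | p) (v | q) h
    · exact h.symm
    · exact h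
    · exact h
    · obtain ⟨v, w, w', rfl, rfl, hadj⟩ := h
      exact ⟨v, w', w, rfl, rfl, hadj.symm⟩
  loopless := by
    constructor
    rintro (u | p) h
    · exact G.irrefl h
    · obtain ⟨v, w, w', rfl, h2, hadj⟩ := h
      obtain rfl : w = w' := by simpa using h2
      exact (H v).irrefl hadj

/-- The rooted product `H(G)` with root `r`. -/
def rootedProduct (G : SimpleGraph V) (H : SimpleGraph W) (r : W) :
    SimpleGraph (V × W) where
  Adj a b := (a.1 = b.1 ∧ H.Adj a.2 b.2) ∨ (a.2 = r ∧ b.2 = r ∧ G.Adj a.1 b.1)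
  symm := by
    constructor
    rintro ⟨x, y⟩ ⟨x', y'⟩ (⟨h1, h2⟩ | ⟨h1, h2, h3⟩)
    · exact Or.inl ⟨h1.symm, h2.symm⟩
    · exact Or.inr ⟨h2, h1, h3.symm⟩
  loopless := by
    constructor
    rintro ⟨x, y⟩ (⟨-, h⟩ | ⟨-, -, h⟩)
    · exact H.irrefl h
    · exact G.irrefl h



section Aux

open Sum

variable {V W : Type*} {G : SimpleGraph V} {H : SimpleGraph W}

private lemma exists_endpoints (e : G.edgeSet) :
    ∃ a b : V, G.Adj a b ∧ (e : Sym2 V) = s(a, b) := by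
  obtain ⟨q, hq⟩ := e
  induction q using Sym2.ind with
  | _ a b => exact ⟨a, b, hq, rfl⟩

private lemma adj_of_mem_mem {e : Sym2 V} (he : e ∈ G.edgeSet) {a t : V}
    (ha : a ∈ e) (ht : t ∈ e) : a = t ∨ G.Adj a t := by
  induction e using Sym2.ind with
  | _ p q =>
    rw [Sym2.mem_iff] at ha ht
    rw [SimpleGraph.mem_edgeSet] at he
    rcases ha with rfl | rfl <;> rcases ht with rfl | rfl
    · exact Or.inl rfl
    · exact Or.inr he
    · exact Or.inr he.symm
    · exact Or.inl rfl

private lemma step {s : Set ((V ⊕ G.edgeSet) ⊕ (G.edgeSet × W))}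
    (hs : sᶜ.Subsingleton) (w₀ : W) {a b : V} (hab : G.Adj a b)
    (ha : inl (inl a) ∈ s) (hb : inl (inl b) ∈ s) :
    ((subdivisionEdgeNC G H).induce s).Reachable ⟨inl (inl a), ha⟩ ⟨inl (inl b), hb⟩ := by
  set e : G.edgeSet := ⟨s(a, b), G.mem_edgeSet.mpr hab⟩ with he
  have hae : a ∈ (e : Sym2 V) := Sym2.mem_mk_left a b
  have hbe : b ∈ (e : Sym2 V) := Sym2.mem_mk_right a b
  by_cases hp : (inl (inr e) : (V ⊕ G.edgeSet) ⊕ (G.edgeSet × W)) ∈ s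
  · have h1 : ((subdivisionEdgeNC G H).induce s).Adj ⟨inl (inl a), ha⟩ ⟨inl (inr e), hp⟩ := hae
    have h2 : ((subdivisionEdgeNC G H).induce s).Adj ⟨inl (inr e), hp⟩ ⟨inl (inl b), hb⟩ := hbe
    exact h1.reachable.trans h2.reachable
  · have hq : (inr (e, w₀) : (V ⊕ G.edgeSet) ⊕ (G.edgeSet × W)) ∈ s := by
      by_contra hq
      exact (by simp : (inl (inr e) : (V ⊕ G.edgeSet) ⊕ (G.edgeSet × W)) ≠ inr (e, w₀)) (hs hp hq)
    have h1 : ((subdivisionEdgeNC G H).induce s).Adj ⟨inl (inl a), ha⟩ ⟨inr (e, w₀), hq⟩ := hae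
    have h2 : ((subdivisionEdgeNC G H).induce s).Adj ⟨inr (e, w₀), hq⟩ ⟨inl (inl b), hb⟩ := hbe
    exact h1.reachable.trans h2.reachable

private lemma reach_lift {s : Set ((V ⊕ G.edgeSet) ⊕ (G.edgeSet × W))}
    (hs : sᶜ.Subsingleton) (w₀ : W) {t : Set V}
    (hts : ∀ v ∈ t, (inl (inl v) : (V ⊕ G.edgeSet) ⊕ (G.edgeSet × W)) ∈ s) :
    ∀ {x y : ↥t}, (G.induce t).Walk x y →
      ((subdivisionEdgeNC G H).induce s).Reachable
        ⟨inl (inl ↑x), hts _ x.2⟩ ⟨inl (inl ↑y), hts _ y.2⟩ := by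
  intro x y p
  induction p with
  | nil => exact Reachable.refl _
  | @cons x z y h p ih =>
      exact (step hs w₀ h (hts _ x.2) (hts _ z.2)).trans ih

private lemma attach {s : Set ((V ⊕ G.edgeSet) ⊕ (G.edgeSet × W))} (hs : sᶜ.Subsingleton)
    (x : (V ⊕ G.edgeSet) ⊕ (G.edgeSet × W)) (hx : x ∈ s) :
    ∃ t, ∃ ht : (inl (inl t) : (V ⊕ G.edgeSet) ⊕ (G.edgeSet × W)) ∈ s,
      ((subdivisionEdgeNC G H).induce s).Reachable ⟨x, hx⟩ ⟨inl (inl t), ht⟩ := by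
  obtain (v | e) | ⟨e, w⟩ := x
  · exact ⟨v, hx, Reachable.refl _⟩
  · obtain ⟨a, b, hab, heq⟩ := exists_endpoints e
    have hae : a ∈ (e : Sym2 V) := by rw [heq]; exact Sym2.mem_mk_left a b
    have hbe : b ∈ (e : Sym2 V) := by rw [heq]; exact Sym2.mem_mk_right a b
    have hor : (inl (inl a) : (V ⊕ G.edgeSet) ⊕ (G.edgeSet × W)) ∈ s ∨
        (inl (inl b) : (V ⊕ G.edgeSet) ⊕ (G.edgeSet × W)) ∈ s := by
      by_contra hc
      push_neg at hc
      have := hs hc.1 hc.2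
      simp only [inl.injEq] at this
      exact hab.ne this
    rcases hor with h | h
    · exact ⟨a, h, ((show ((subdivisionEdgeNC G H).induce s).Adj ⟨inl (inr e), hx⟩
        ⟨inl (inl a), h⟩ from hae)).reachable⟩
    · exact ⟨b, h, ((show ((subdivisionEdgeNC G H).induce s).Adj ⟨inl (inr e), hx⟩
        ⟨inl (inl b), h⟩ from hbe)).reachable⟩
  · obtain ⟨a, b, hab, heq⟩ := exists_endpoints e
    have hae : a ∈ (e : Sym2 V) := by rw [heq]; exact Sym2.mem_mk_left a b
    have hbe : b ∈ (e : Sym2 V) := by rw [heq]; exact Sym2.mem_mk_right a b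
    have hor : (inl (inl a) : (V ⊕ G.edgeSet) ⊕ (G.edgeSet × W)) ∈ s ∨
        (inl (inl b) : (V ⊕ G.edgeSet) ⊕ (G.edgeSet × W)) ∈ s := by
      by_contra hc
      push_neg at hc
      have := hs hc.1 hc.2
      simp only [inl.injEq] at this
      exact hab.ne this
    rcases hor with h | h
    · exact ⟨a, h, ((show ((subdivisionEdgeNC G H).induce s).Adj ⟨inr (e, w), hx⟩
        ⟨inl (inl a), h⟩ from hae)).reachable⟩
    · exact ⟨b, h, ((show ((subdivisionEdgeNC G H).induce s).Adj ⟨inr (e, w), hx⟩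
        ⟨inl (inl b), h⟩ from hbe)).reachable⟩

private lemma pre_univ {G : SimpleGraph V} (hG : G.Preconnected) {s : Set V}
    (hs : s = Set.univ) : (G.induce s).Preconnected := by
  subst hs
  exact hG.map (induceUnivIso G).symm.toHom (induceUnivIso G).symm.surjective

private lemma pre_of {s : Set ((V ⊕ G.edgeSet) ⊕ (G.edgeSet × W))} (hs : sᶜ.Subsingleton)
    (w₀ : W)
    (hG : (G.induce {v : V |
      (inl (inl v) : (V ⊕ G.edgeSet) ⊕ (G.edgeSet × W)) ∈ s}).Preconnected) :
    ((subdivisionEdgeNC G H).induce s).Preconnected := by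
  rintro ⟨x, hx⟩ ⟨y, hy⟩
  obtain ⟨t, ht, hxt⟩ := attach hs x hx
  obtain ⟨t', ht', hyt⟩ := attach hs y hy
  obtain ⟨p⟩ := hG ⟨t, ht⟩ ⟨t', ht'⟩
  exact hxt.trans ((reach_lift hs w₀ (fun v hv => hv) p).trans hyt.symm)

private lemma exists_mem_ne (u : V) (e : G.edgeSet) :
    ∃ t, t ∈ (e : Sym2 V) ∧ t ≠ u := by
  obtain ⟨a, b, hab, heq⟩ := exists_endpoints e
  rcases eq_or_ne a u with rfl | ha
  · exact ⟨b, by rw [heq]; exact Sym2.mem_mk_right _ _, fun hbu => hab.ne' (hbu ▸ rfl)⟩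
  · exact ⟨a, by rw [heq]; exact Sym2.mem_mk_left _ _, ha⟩

private noncomputable def proj (G : SimpleGraph V) (u : V) :
    (V ⊕ G.edgeSet) ⊕ (G.edgeSet × W) → V
  | inl (inl v) => v
  | inl (inr e) => (exists_mem_ne u e).choose
  | inr (e, _) => (exists_mem_ne u e).choose

private lemma proj_ne {u : V} :
    ∀ x : (V ⊕ G.edgeSet) ⊕ (G.edgeSet × W), x ≠ inl (inl u) → proj (W := W) G u x ≠ u := by
  rintro ((v | e) | ⟨e, w⟩) hx
  · intro h; exact hx (by rw [show proj (W := W) G u (inl (inl v)) = v from rfl] at h; rw [h])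
  · exact (exists_mem_ne u e).choose_spec.2
  · exact (exists_mem_ne u e).choose_spec.2

private lemma reach_pair {u a t : V} (ha : a ∈ ({u}ᶜ : Set V)) (ht : t ∈ ({u}ᶜ : Set V))
    (h : a = t ∨ G.Adj a t) :
    (G.induce ({u}ᶜ : Set V)).Reachable ⟨a, ha⟩ ⟨t, ht⟩ := by
  rcases h with rfl | h
  · exact Reachable.refl _
  · exact (show (G.induce ({u}ᶜ : Set V)).Adj ⟨a, ha⟩ ⟨t, ht⟩ from h).reachable

private lemma proj_adj {u : V} {x y : (V ⊕ G.edgeSet) ⊕ (G.edgeSet × W)}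
    (hxy : (subdivisionEdgeNC G H).Adj x y) (hx : x ≠ inl (inl u)) (hy : y ≠ inl (inl u)) :
    (G.induce ({u}ᶜ : Set V)).Reachable ⟨proj (W := W) G u x, proj_ne x hx⟩
      ⟨proj (W := W) G u y, proj_ne y hy⟩ := by
  obtain (a | e) | ⟨e, w⟩ := x <;> obtain (b | e') | ⟨e', w'⟩ := y
  · exact hxy.elim
  · exact reach_pair _ _ (adj_of_mem_mem e'.2 hxy (exists_mem_ne u e').choose_spec.1)
  · exact reach_pair _ _ (adj_of_mem_mem e'.2 hxy (exists_mem_ne u e').choose_spec.1)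
  · exact reach_pair _ _ (adj_of_mem_mem e.2 (exists_mem_ne u e).choose_spec.1 hxy)
  · exact hxy.elim
  · exact hxy.elim
  · exact reach_pair _ _ (adj_of_mem_mem e.2 (exists_mem_ne u e).choose_spec.1 hxy)
  · exact hxy.elim
  · obtain ⟨rfl, -⟩ := hxy
    exact Reachable.refl _

private lemma pre_to (u : V)
    (h : ((subdivisionEdgeNC G H).induce
      (({inl (inl u)} : Set ((V ⊕ G.edgeSet) ⊕ (G.edgeSet × W)))ᶜ)).Preconnected) :
    (G.induce ({u}ᶜ : Set V)).Preconnected := by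
  have hmem : ∀ x : ↥(({inl (inl u)} : Set ((V ⊕ G.edgeSet) ⊕ (G.edgeSet × W)))ᶜ),
      x.val ≠ inl (inl u) := fun x => x.2
  have main : ∀ (x y : ↥(({inl (inl u)} : Set ((V ⊕ G.edgeSet) ⊕ (G.edgeSet × W)))ᶜ)),
      ((subdivisionEdgeNC G H).induce _).Walk x y →
      (G.induce ({u}ᶜ : Set V)).Reachable
        ⟨proj (W := W) G u x.val, proj_ne _ (hmem x)⟩
        ⟨proj (W := W) G u y.val, proj_ne _ (hmem y)⟩ := by
    intro x y p
    induction p with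
    | nil => exact Reachable.refl _
    | @cons x z y hadj p ih =>
        exact (proj_adj hadj (hmem x) (hmem z)).trans ih
  intro a b
  have ha : (inl (inl a.val) : (V ⊕ G.edgeSet) ⊕ (G.edgeSet × W)) ∈
      ({inl (inl u)} : Set ((V ⊕ G.edgeSet) ⊕ (G.edgeSet × W)))ᶜ := by
    simp only [Set.mem_compl_iff, Set.mem_singleton_iff, inl.injEq]
    exact a.2
  have hb : (inl (inl b.val) : (V ⊕ G.edgeSet) ⊕ (G.edgeSet × W)) ∈
      ({inl (inl u)} : Set ((V ⊕ G.edgeSet) ⊕ (G.edgeSet × W)))ᶜ := by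
    simp only [Set.mem_compl_iff, Set.mem_singleton_iff, inl.injEq]
    exact b.2
  obtain ⟨p⟩ := h ⟨inl (inl a.val), ha⟩ ⟨inl (inl b.val), hb⟩
  exact main _ _ p

private lemma exists_edge_mem (hGconn : G.Connected) (hne : ∃ a b : V, a ≠ b) (t : V) :
    ∃ e : G.edgeSet, t ∈ (e : Sym2 V) := by
  obtain ⟨a, b, hab⟩ := hne
  have hy : ∃ y, y ≠ t := by
    rcases eq_or_ne a t with rfl | h
    · exact ⟨b, fun hbt => hab hbt.symm⟩
    · exact ⟨a, h⟩
  obtain ⟨y, hy⟩ := hy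
  obtain ⟨p⟩ := hGconn.preconnected t y
  cases p with
  | nil => exact absurd rfl hy
  | cons h q => exact ⟨⟨s(t, _), G.mem_edgeSet.mpr h⟩, Sym2.mem_mk_left _ _⟩

end Aux

theorem subdivisionEdgeNC_kappaG_eq_one_iff {V W : Type*} [Fintype V] [Fintype W] [DecidableEq V]
    (G : SimpleGraph V) (H : SimpleGraph W)
    (hGconn : G.Connected) (hGnc : G ≠ ⊤) (hHconn : H.Connected)
    (m : ℕ) (hm : Fintype.card W = m) (g : ℕ) (hg : g + 1 ≤ m) :
    kappaG (subdivisionEdgeNC G H) g = 1 ↔ kappa G = 1 := by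
  classical
  obtain ⟨w₀⟩ : Nonempty W := hHconn.nonempty
  have hne2 : ∃ a b : V, a ≠ b := by
    by_contra hc
    push_neg at hc
    apply hGnc
    ext x y
    simp only [SimpleGraph.top_adj]
    constructor
    · exact fun h => absurd (hc x y) h.ne
    · exact fun h => absurd (hc x y) h
  -- K preconnected whenever at most one vertex removed and none of form inl inl
  have hKpre : ∀ (s : Set ((V ⊕ G.edgeSet) ⊕ (G.edgeSet × W))), sᶜ.Subsingleton →
      ({v : V | (Sum.inl (Sum.inl v) : (V ⊕ G.edgeSet) ⊕ (G.edgeSet × W)) ∈ s} = Set.univ) →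
      ((subdivisionEdgeNC G H).induce s).Preconnected := by
    intro s hs hsu
    exact pre_of hs w₀ (pre_univ hGconn.preconnected hsu)
  have hK_ne_empty : ∀ S : Finset ((V ⊕ G.edgeSet) ⊕ (G.edgeSet × W)),
      IsRgVertexCut (subdivisionEdgeNC G H) g ↑S → S ≠ ∅ := by
    rintro S hS rfl
    refine hS.1 (hKpre _ ?_ ?_)
    · rw [compl_compl]
      simp only [Finset.coe_empty]
      exact Set.subsingleton_empty
    · ext v; simp
  constructor
  · -- forward
    intro hk
    have hmem : ∃ S : Finset ((V ⊕ G.edgeSet) ⊕ (G.edgeSet × W)),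
        IsRgVertexCut (subdivisionEdgeNC G H) g ↑S ∧ S.card = 1 := by
      by_contra hno
      push_neg at hno
      have h2 : (2 : ℕ∞) ≤ kappaG (subdivisionEdgeNC G H) g := by
        apply le_sInf
        rintro n ⟨S, hS, rfl⟩
        have h1 : 1 ≤ S.card :=
          Finset.card_pos.mpr (Finset.nonempty_iff_ne_empty.mpr (hK_ne_empty S hS))
        have hcard : S.card ≠ 1 := hno S hS
        have : 2 ≤ S.card := by omega
        exact_mod_cast this
      rw [hk] at h2
      exact absurd h2 (by norm_num)
    obtain ⟨S, hS, hS1⟩ := hmem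
    obtain ⟨x, rfl⟩ := Finset.card_eq_one.mp hS1
    rw [Finset.coe_singleton] at hS
    have hcut : ∃ u : V, IsVertexCut G ↑({u} : Finset V) := by
      obtain (u | e₀) | ⟨e₀, w₁⟩ := x
      · refine ⟨u, ?_⟩
        intro hpre
        apply hS.1
        apply pre_of (by rw [compl_compl]; exact Set.subsingleton_singleton) w₀
        have hset : {v : V | (Sum.inl (Sum.inl v) : (V ⊕ G.edgeSet) ⊕ (G.edgeSet × W)) ∈
            ({Sum.inl (Sum.inl u)} : Set ((V ⊕ G.edgeSet) ⊕ (G.edgeSet × W)))ᶜ} =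
            (↑({u} : Finset V) : Set V)ᶜ := by
          ext v
          simp
        rw [hset]
        exact hpre
      · exact absurd (hKpre _ (by rw [compl_compl]; exact Set.subsingleton_singleton)
          (by ext v; simp)) hS.1
      · exact absurd (hKpre _ (by rw [compl_compl]; exact Set.subsingleton_singleton)
          (by ext v; simp)) hS.1
    obtain ⟨u, hcut⟩ := hcut
    have h1mem : 1 ∈ {n : ℕ | ∃ S : Finset V, IsVertexCut G ↑S ∧ S.card = n} :=
      ⟨{u}, hcut, Finset.card_singleton u⟩
    have h0 : 0 ∉ {n : ℕ | ∃ S : Finset V, IsVertexCut G ↑S ∧ S.card = n} := by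
      rintro ⟨S, hS0, hc⟩
      rw [Finset.card_eq_zero] at hc
      subst hc
      exact hS0 (pre_univ hGconn.preconnected (by ext v; simp))
    refine le_antisymm (Nat.sInf_le h1mem) ?_
    rcases Nat.eq_zero_or_pos (kappa G) with h | h
    · rw [kappa, Nat.sInf_eq_zero] at h
      rcases h with h | h
      · exact absurd h h0
      · rw [h] at h1mem
        exact absurd h1mem (Set.notMem_empty 1)
    · exact h
  · -- backward
    intro hk
    have hnon : {n : ℕ | ∃ S : Finset V, IsVertexCut G ↑S ∧ S.card = n}.Nonempty := by
      by_contra hc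
      rw [Set.not_nonempty_iff_eq_empty] at hc
      rw [kappa, hc, Nat.sInf_empty] at hk
      exact absurd hk (by norm_num)
    have h1 : 1 ∈ {n : ℕ | ∃ S : Finset V, IsVertexCut G ↑S ∧ S.card = n} := by
      rw [← hk]
      exact Nat.sInf_mem hnon
    obtain ⟨S, hScut, hc⟩ := h1
    obtain ⟨u, rfl⟩ := Finset.card_eq_one.mp hc
    rw [Finset.coe_singleton] at hScut
    have hRg : IsRgVertexCut (subdivisionEdgeNC G H) g
        ↑({Sum.inl (Sum.inl u)} : Finset ((V ⊕ G.edgeSet) ⊕ (G.edgeSet × W))) := by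
      rw [Finset.coe_singleton]
      constructor
      · intro hpre
        exact hScut (pre_to u hpre)
      · intro c
        obtain ⟨x, hx⟩ := c.exists_rep
        obtain ⟨t, ht, hreach⟩ := attach
          (by rw [compl_compl]; exact Set.subsingleton_singleton) x.val x.2
        obtain ⟨e, hte⟩ := exists_edge_mem hGconn hne2 t
        have hmemw : ∀ w : W, (Sum.inr (e, w) : (V ⊕ G.edgeSet) ⊕ (G.edgeSet × W)) ∈
            ({Sum.inl (Sum.inl u)} : Set ((V ⊕ G.edgeSet) ⊕ (G.edgeSet × W)))ᶜ := by
          intro w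
          simp
        have hcomp : ∀ w : W,
            ((subdivisionEdgeNC G H).induce _).connectedComponentMk ⟨Sum.inr (e, w), hmemw w⟩
              = c := by
          intro w
          rw [← hx]
          apply ConnectedComponent.sound
          have hadj : ((subdivisionEdgeNC G H).induce
              (({Sum.inl (Sum.inl u)} : Set ((V ⊕ G.edgeSet) ⊕ (G.edgeSet × W)))ᶜ)).Adj
              ⟨Sum.inr (e, w), hmemw w⟩ ⟨Sum.inl (Sum.inl t), ht⟩ := hte
          exact hadj.reachable.trans hreach.symm
        have hinj : Function.Injective (fun w : W =>
            (⟨⟨Sum.inr (e, w), hmemw w⟩, hcomp w⟩ :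
              {v // ((subdivisionEdgeNC G H).induce _).connectedComponentMk v = c})) := by
          intro w w' hww
          have := congrArg (fun z => z.val.val) hww
          simpa using this
        calc g + 1 ≤ m := hg
          _ = Nat.card W := by rw [← hm, Nat.card_eq_fintype_card]
          _ ≤ _ := Nat.card_le_card_of_injective _ hinj
    apply le_antisymm
    · exact sInf_le ⟨{Sum.inl (Sum.inl u)}, hRg, by simp⟩
    · apply le_sInf
      rintro n ⟨S, hS, rfl⟩
      have h1 : 1 ≤ S.card :=
        Finset.card_pos.mpr (Finset.nonempty_iff_ne_empty.mpr (hK_ne_empty S hS))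
      exact_mod_cast h1


end ExtraConn
end

section
/- Let G be a connected non-complete nontrivial graph with κ(G) ≥ 2 and H a nontrivial connected graph. Then the 0-extra vertex connectivity of the subdivision edge neighbourhood corona satisfies κ_0(G ⊟ H) = 2. -/
open SimpleGraph

namespace ExtraConn

variable {V W : Type*}

section Aux

variable {V W : Type*} [Fintype V] [Fintype W] [DecidableEq V]
    [Nontrivial V] [Nontrivial W]

/-- Endpoints of an edge. -/
lemma exists_endpoints_s12 {V : Type*} (G : SimpleGraph V) (e : Sym2 V) (he : e ∈ G.edgeSet) :
    ∃ u v, u ∈ e ∧ v ∈ e ∧ u ≠ v ∧ G.Adj u v := by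
  induction e using Sym2.ind with
  | _ u v =>
    rw [SimpleGraph.mem_edgeSet] at he
    exact ⟨u, v, Sym2.mem_mk_left u v, Sym2.mem_mk_right u v, he.ne, he⟩

/-- Removing at most one vertex from `G ⊟ H` leaves it preconnected. -/
lemma subdivisionEdgeNC_del_one_preconnected [Nonempty W]
    (G : SimpleGraph V) (H : SimpleGraph W)
    (hGconn : G.Connected) (hkappa : 2 ≤ kappa G)
    (S : Set ((V ⊕ G.edgeSet) ⊕ (G.edgeSet × W)))
    (hS : ∀ a ∈ S, ∀ b ∈ S, a = b) :
    ((subdivisionEdgeNC G H).induce Sᶜ).Preconnected := by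
  classical
  obtain ⟨w0⟩ := ‹Nonempty W›
  set K := subdivisionEdgeNC G H with hK
  -- step through the "middle" vertex of an edge
  have mid : ∀ (e : G.edgeSet) (s t : V), s ∈ (e : Sym2 V) → t ∈ (e : Sym2 V) →
      ∀ (hs : (Sum.inl (Sum.inl s) : (V ⊕ G.edgeSet) ⊕ (G.edgeSet × W)) ∈ Sᶜ)
        (ht : (Sum.inl (Sum.inl t) : (V ⊕ G.edgeSet) ⊕ (G.edgeSet × W)) ∈ Sᶜ),
        (K.induce Sᶜ).Reachable ⟨_, hs⟩ ⟨_, ht⟩ := by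
    intro e s t hse hte hs ht
    by_cases hm : (Sum.inl (Sum.inr e) : (V ⊕ G.edgeSet) ⊕ (G.edgeSet × W)) ∈ S
    · have hm2 : (Sum.inr (e, w0) : (V ⊕ G.edgeSet) ⊕ (G.edgeSet × W)) ∈ Sᶜ := by
        intro h
        exact absurd (hS _ h _ hm) (by simp)
      have h1 : (K.induce Sᶜ).Adj ⟨_, hs⟩ ⟨_, hm2⟩ := hse
      have h2 : (K.induce Sᶜ).Adj ⟨_, hm2⟩ ⟨_, ht⟩ := hte
      exact h1.reachable.trans h2.reachable
    · have hm2 : (Sum.inl (Sum.inr e) : (V ⊕ G.edgeSet) ⊕ (G.edgeSet × W)) ∈ Sᶜ := hm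
      have h1 : (K.induce Sᶜ).Adj ⟨_, hs⟩ ⟨_, hm2⟩ := hse
      have h2 : (K.induce Sᶜ).Adj ⟨_, hm2⟩ ⟨_, ht⟩ := hte
      exact h1.reachable.trans h2.reachable
  -- reachability between surviving original vertices
  have hAreach : ∀ (s t : V)
      (hs : (Sum.inl (Sum.inl s) : (V ⊕ G.edgeSet) ⊕ (G.edgeSet × W)) ∈ Sᶜ)
      (ht : (Sum.inl (Sum.inl t) : (V ⊕ G.edgeSet) ⊕ (G.edgeSet × W)) ∈ Sᶜ),
      (K.induce Sᶜ).Reachable ⟨_, hs⟩ ⟨_, ht⟩ := by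
    by_cases hx : ∃ u₀ : V, (Sum.inl (Sum.inl u₀) : (V ⊕ G.edgeSet) ⊕ (G.edgeSet × W)) ∈ S
    · obtain ⟨u₀, hu₀⟩ := hx
      have hGd : (G.induce ({u₀} : Set V)ᶜ).Preconnected := by
        by_contra hcut
        have h1 : (1 : ℕ) ∈ {n : ℕ | ∃ S : Finset V, IsVertexCut G ↑S ∧ S.card = n} := by
          refine ⟨{u₀}, ?_, Finset.card_singleton u₀⟩
          unfold IsVertexCut
          rwa [Finset.coe_singleton]
        have := Nat.sInf_le h1
        unfold kappa at hkappa
        omega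
      have hnot : ∀ u : V, u ≠ u₀ →
          (Sum.inl (Sum.inl u) : (V ⊕ G.edgeSet) ⊕ (G.edgeSet × W)) ∈ Sᶜ := by
        intro u hu h
        exact hu (by simpa using hS _ h _ hu₀)
      intro s t hs ht
      have hsne : s ≠ u₀ := by rintro rfl; exact hs hu₀
      have htne : t ≠ u₀ := by rintro rfl; exact ht hu₀
      obtain ⟨p⟩ := hGd ⟨s, hsne⟩ ⟨t, htne⟩
      have main : ∀ (a b : ↥({u₀} : Set V)ᶜ), (G.induce ({u₀} : Set V)ᶜ).Walk a b →
          (K.induce Sᶜ).Reachable ⟨Sum.inl (Sum.inl ↑a), hnot _ a.2⟩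
            ⟨Sum.inl (Sum.inl ↑b), hnot _ b.2⟩ := by
        intro a b q
        induction q with
        | nil => exact Reachable.refl _
        | @cons a c b hadj q ih =>
          have hac : G.Adj ↑a ↑c := hadj
          refine Reachable.trans ?_ ih
          exact mid ⟨s(↑a, ↑c), hac⟩ ↑a ↑c (Sym2.mem_mk_left _ _) (Sym2.mem_mk_right _ _) _ _
      have := main ⟨s, hsne⟩ ⟨t, htne⟩ p
      convert this using 2
    · push_neg at hx
      intro s t hs ht
      obtain ⟨p⟩ := hGconn.preconnected s t
      have main : ∀ (a b : V), G.Walk a b →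
          (K.induce Sᶜ).Reachable ⟨Sum.inl (Sum.inl a), hx a⟩ ⟨Sum.inl (Sum.inl b), hx b⟩ := by
        intro a b q
        induction q with
        | nil => exact Reachable.refl _
        | @cons a c b hadj q ih =>
          refine Reachable.trans ?_ ih
          exact mid ⟨s(a, c), hadj⟩ a c (Sym2.mem_mk_left _ _) (Sym2.mem_mk_right _ _) _ _
      have := main s t p
      convert this using 2
  -- every surviving vertex reaches a surviving original vertex
  have anchor : ∀ (a : ↥Sᶜ), ∃ (u : V)
      (hu : (Sum.inl (Sum.inl u) : (V ⊕ G.edgeSet) ⊕ (G.edgeSet × W)) ∈ Sᶜ),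
      (K.induce Sᶜ).Reachable a ⟨_, hu⟩ := by
    rintro ⟨(u | e) | ⟨e, w⟩, ha⟩
    · exact ⟨u, ha, Reachable.refl _⟩
    · obtain ⟨u, v, hue, hve, huv, -⟩ := exists_endpoints_s12 G ↑e e.2
      by_cases hu : (Sum.inl (Sum.inl u) : (V ⊕ G.edgeSet) ⊕ (G.edgeSet × W)) ∈ S
      · have hv : (Sum.inl (Sum.inl v) : (V ⊕ G.edgeSet) ⊕ (G.edgeSet × W)) ∈ Sᶜ := by
          intro h
          exact huv (by simpa using hS _ hu _ h)
        refine ⟨v, hv, SimpleGraph.Adj.reachable ?_⟩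
        exact hve
      · refine ⟨u, hu, SimpleGraph.Adj.reachable ?_⟩
        exact hue
    · obtain ⟨u, v, hue, hve, huv, -⟩ := exists_endpoints_s12 G ↑e e.2
      by_cases hu : (Sum.inl (Sum.inl u) : (V ⊕ G.edgeSet) ⊕ (G.edgeSet × W)) ∈ S
      · have hv : (Sum.inl (Sum.inl v) : (V ⊕ G.edgeSet) ⊕ (G.edgeSet × W)) ∈ Sᶜ := by
          intro h
          exact huv (by simpa using hS _ hu _ h)
        refine ⟨v, hv, SimpleGraph.Adj.reachable ?_⟩
        exact hve
      · refine ⟨u, hu, SimpleGraph.Adj.reachable ?_⟩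
        exact hue
  intro a b
  obtain ⟨ua, hua, ra⟩ := anchor a
  obtain ⟨ub, hub, rb⟩ := anchor b
  exact ra.trans ((hAreach ua ub hua hub).trans rb.symm)

end Aux

theorem subdivisionEdgeNC_kappaG_zero {V W : Type*} [Fintype V] [Fintype W] [DecidableEq V]
    [Nontrivial V] [Nontrivial W]
    (G : SimpleGraph V) (H : SimpleGraph W)
    (hGconn : G.Connected) (hGnc : G ≠ ⊤) (hHconn : H.Connected)
    (hkappa : 2 ≤ kappa G) :
    kappaG (subdivisionEdgeNC G H) 0 = 2 := by
  classical
  have hWne : Nonempty W := inferInstance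
  obtain ⟨w0⟩ := hWne
  haveI : Finite ((V ⊕ G.edgeSet) ⊕ (G.edgeSet × W)) := by infer_instance
  -- G has an edge
  obtain ⟨u, v, huv⟩ : ∃ u v : V, G.Adj u v := by
    obtain ⟨a, b, hab⟩ := exists_pair_ne V
    obtain ⟨p⟩ := hGconn.preconnected a b
    cases p with
    | nil => exact absurd rfl hab
    | cons h q => exact ⟨_, _, h⟩
  set e : G.edgeSet := ⟨s(u, v), huv⟩ with he
  set S₀ : Finset ((V ⊕ G.edgeSet) ⊕ (G.edgeSet × W)) :=
    {Sum.inl (Sum.inl u), Sum.inl (Sum.inl v)} with hS₀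
  have hcard : S₀.card = 2 := by
    rw [hS₀]
    exact Finset.card_pair (by simp [huv.ne])
  have hpmem : (Sum.inl (Sum.inr e) : (V ⊕ G.edgeSet) ⊕ (G.edgeSet × W)) ∈ (↑S₀ : Set _)ᶜ := by
    simp [hS₀]
  have hqmem : (Sum.inr (e, w0) : (V ⊕ G.edgeSet) ⊕ (G.edgeSet × W)) ∈ (↑S₀ : Set _)ᶜ := by
    simp [hS₀]
  have hcut : IsRgVertexCut (subdivisionEdgeNC G H) 0 ↑S₀ := by
    constructor
    · intro hpre
      obtain ⟨p⟩ := hpre ⟨_, hpmem⟩ ⟨_, hqmem⟩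
      cases p with
      | cons h q =>
        -- h : adjacency from the subdivision vertex of e to some surviving vertex
        clear q
        rename_i m
        obtain ⟨m, hm⟩ := m
        rcases m with (u' | e') | ⟨e', w'⟩
        · have hmem : u' ∈ (↑e : Sym2 V) := h
          rw [he] at hmem
          rcases Sym2.mem_iff.mp hmem with rfl | rfl <;> simp [hS₀] at hm
        · exact h
        · exact h
    · intro c
      obtain ⟨x, hx⟩ := c.exists_rep
      haveI : Nonempty {y // ((subdivisionEdgeNC G H).induce (↑S₀ : Set _)ᶜ).connectedComponentMk y = c} :=
        ⟨⟨x, hx⟩⟩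
      simp only [zero_add]
      exact Nat.card_pos
  refine le_antisymm ?_ ?_
  · refine sInf_le ?_
    exact ⟨S₀, hcut, by rw [hcard]; rfl⟩
  · refine le_sInf ?_
    rintro n ⟨T, hT, rfl⟩
    by_contra hlt
    push_neg at hlt
    have hTcard : T.card ≤ 1 := by
      have : (T.card : ℕ∞) < 2 := hlt
      exact_mod_cast Nat.lt_succ_iff.mp (by exact_mod_cast this)
    have hsub : ∀ a ∈ (↑T : Set ((V ⊕ G.edgeSet) ⊕ (G.edgeSet × W))), ∀ b ∈ (↑T : Set ((V ⊕ G.edgeSet) ⊕ (G.edgeSet × W))), a = b := by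
      intro a ha b hb
      exact Finset.card_le_one.mp hTcard a ha b hb
    exact hT.1 (subdivisionEdgeNC_del_one_preconnected G H hGconn hkappa
      (↑T : Set ((V ⊕ G.edgeSet) ⊕ (G.edgeSet × W))) hsub)

end ExtraConn
end
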